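/- Under Assumption *, let Λ be a spectrum of the infinite convolution μ with 0 ∈ Λ. Then Λ ⊆ ℚ. -/

import Mathlib

open MeasureTheory Filter Topology Complex Polynomial

/-- The exponential function `e_l(x) = e^{-2πi l x}`. -/
noncomputable def expFun (l x : ℝ) : ℂ :=
  Complex.exp (((-2 * Real.pi * l * x : ℝ) : ℂ) * Complex.I)

/-- The Fourier transform `μ̂(ξ) = ∫ e^{-2πiξx} dμ(x)` of a measure on `ℝ`. -/
noncomputable def ft (μ : Measure ℝ) (ξ : ℝ) : ℂ := ∫ x, expFun ξ x ∂μ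

/-- `Λ` is an orthogonal (orthonormal) set for `μ`: the exponentials `e_λ`, `λ ∈ Λ`, form an
orthonormal family in `L²(μ)`. -/
def IsOrthoSet (μ : Measure ℝ) (Λ : Set ℝ) : Prop :=
  ∀ l₁ ∈ Λ, ∀ l₂ ∈ Λ,
    (∫ x, (starRingEnd ℂ) (expFun l₁ x) * expFun l₂ x ∂μ) = if l₁ = l₂ then 1 else 0

/-- `(μ, Λ)` is a spectral pair: the exponentials `{e_λ : λ ∈ Λ}` form an orthonormal family
which is maximal (total) in `L²(μ)`, i.e. an orthonormal basis of `L²(μ)`. -/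
def IsSpectralPair (μ : Measure ℝ) (Λ : Set ℝ) : Prop :=
  IsOrthoSet μ Λ ∧
  ∀ f : ℝ → ℂ, MemLp f 2 μ →
    (∀ l ∈ Λ, (∫ x, (starRingEnd ℂ) (expFun l x) * f x ∂μ) = 0) → f =ᵐ[μ] 0

/-- `μ` is a spectral measure: some countable `Λ ⊆ ℝ` is a spectrum of `μ`. -/
def IsSpectralMeasure (μ : Measure ℝ) : Prop :=
  ∃ Λ : Set ℝ, Λ.Countable ∧ IsSpectralPair μ Λ

/-- The uniform probability measure `δ_A` on a finite set `A ⊆ ℝ`. -/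
noncomputable def uniformD (A : Finset ℝ) : Measure ℝ :=
  (A.card : ENNReal)⁻¹ • ∑ a ∈ A, Measure.dirac a

/-- The measure `δ_{c⁻¹ B}` for a finite set `B ⊆ ℤ` and a scaling factor `c`. -/
noncomputable def scaledB (B : Finset ℤ) (c : ℝ) : Measure ℝ :=
  uniformD (B.image fun b : ℤ => (b : ℝ) / c)

/-- The finite convolutions `μ_k = δ_{N₁⁻¹B₁} ∗ δ_{(N₁N₂)⁻¹B₂} ∗ ⋯ ∗ δ_{(N₁⋯N_k)⁻¹B_k}`
(the sequences are indexed starting from `k = 1`; `μ_0 = δ_0`). -/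
noncomputable def partialConv (N : ℕ → ℕ) (B : ℕ → Finset ℤ) : ℕ → Measure ℝ
  | 0 => Measure.dirac 0
  | k + 1 =>
      MeasureTheory.Measure.conv (partialConv N B k)
        (scaledB (B (k + 1)) (∏ i ∈ Finset.Icc 1 (k + 1), (N i : ℝ)))

/-- `μ` is the infinite convolution of `{(N_k, B_k)}_{k=1}^∞`: it is a Borel probability
measure and the finite convolutions `μ_k` converge weakly to `μ`. -/
def IsInfiniteConv (N : ℕ → ℕ) (B : ℕ → Finset ℤ) (μ : Measure ℝ) : Prop :=
  IsProbabilityMeasure μ ∧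
    ∀ f : BoundedContinuousFunction ℝ ℝ,
      Tendsto (fun k => ∫ x, f x ∂(partialConv N B k)) atTop (𝓝 (∫ x, f x ∂μ))

/-- `ν` is the tail infinite convolution `ν_{>k} = δ_{N_{k+1}⁻¹B_{k+1}} ∗ ⋯`. -/
def IsNuGt (N : ℕ → ℕ) (B : ℕ → Finset ℤ) (k : ℕ) (ν : Measure ℝ) : Prop :=
  IsInfiniteConv (fun j => N (k + j)) (fun j => B (k + j)) ν

/-- A family of measures is tight. -/
def IsTightFamily {ι : Type*} (Φ : ι → Measure ℝ) : Prop :=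
  ∀ ε : ENNReal, 0 < ε → ∃ K : Set ℝ, IsCompact K ∧ ∀ i, 1 - ε < Φ i K

/-- `B` is a complete residue system modulo `M`: each residue class modulo `M` contains
exactly one element of `B`. -/
def IsCRS (B : Finset ℤ) (M : ℕ) : Prop :=
  ∀ r : ZMod M, ∃! b : ℤ, b ∈ B ∧ ((b : ZMod M) = r)

/-- `∑_{b ∈ B} x^{b - b⁎}` where `b⁎ = min B`, i.e. `x^{-b⁎} ∑_{b ∈ B} x^b`. -/
noncomputable def numerPoly (B : Finset ℤ) : Polynomial ℤ :=
  ∑ b ∈ B, Polynomial.X ^ (b - (B.min.untopD 0)).toNat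

/-- `∑_{k=0}^{n-1} x^k`. -/
noncomputable def geomPoly (n : ℕ) : Polynomial ℤ :=
  ∑ k ∈ Finset.range n, Polynomial.X ^ k

/-- The character polynomial `f_B(x) = (∑_{b∈B} x^b)/(x^{b⁎} ∑_{k=0}^{#B-1} x^k)`,
obtained by dividing by the monic polynomial `∑_{k=0}^{#B-1} x^k`. -/
noncomputable def charPoly (B : Finset ℤ) : Polynomial ℤ :=
  numerPoly B /ₘ geomPoly B.card

/-- `B` (a complete residue system modulo `M`) satisfies the uniform discrete zero
condition: `Z(f_B ∘ e^{-2πix}) ⊆ {j/M : j ∈ ℤ ∖ Mℤ}`. -/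
def SatisfiesUDZ (B : Finset ℤ) (M : ℕ) : Prop :=
  {x : ℝ | Polynomial.aeval (expFun x 1) (charPoly B) = 0} ⊆
    {x : ℝ | ∃ j : ℤ, ¬ ((M : ℤ) ∣ j) ∧ x = (j : ℝ) / M}

/-- `M_B(ξ) = (1/#B) ∑_{b∈B} e^{-2πibξ}`, the Fourier transform of `δ_B`. -/
noncomputable def MB (B : Finset ℤ) (ξ : ℝ) : ℂ :=
  (B.card : ℂ)⁻¹ * ∑ b ∈ B, expFun (b : ℝ) ξ

/-- `Q_{μ,Λ}(ξ) = ∑_{λ ∈ Λ} |μ̂(ξ+λ)|²`. -/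
noncomputable def Qf (μ : Measure ℝ) (Λ : Set ℝ) (ξ : ℝ) : ℝ :=
  ∑' l : Λ, ‖ft μ (ξ + (l : ℝ))‖ ^ 2


/-! ### Auxiliary lemmas -/

section ExpFunBasics

lemma expFun_add' (l : ℝ) (x y : ℝ) : expFun l (x + y) = expFun l x * expFun l y := by
  simp only [expFun, ← Complex.exp_add]; congr 1; push_cast; ring

lemma expFun_norm (l x : ℝ) : ‖expFun l x‖ = 1 := by
  simp [expFun, Complex.norm_exp]

lemma expFun_continuous (l : ℝ) : Continuous (expFun l) := by
  unfold expFun; fun_prop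

lemma expFun_zero_left (x : ℝ) : expFun 0 x = 1 := by simp [expFun]

lemma integrable_expFun (l : ℝ) (μ : Measure ℝ) [IsFiniteMeasure μ] :
    Integrable (expFun l) μ := by
  refine Integrable.mono' (integrable_const 1) ((expFun_continuous l).aestronglyMeasurable) ?_
  filter_upwards with x using le_of_eq (expFun_norm l x)

lemma expFun_int (b : ℤ) (η : ℝ) : expFun (b : ℝ) η = (expFun η 1) ^ b := by
  unfold expFun
  rw [← Complex.exp_int_mul]
  congr 1
  push_cast
  ring

lemma expFun_ne_zero (l x : ℝ) : expFun l x ≠ 0 := Complex.exp_ne_zero _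

end ExpFunBasics

section FtPartialConv

lemma uniformD_prob (A : Finset ℝ) (h : A.Nonempty) : IsProbabilityMeasure (uniformD A) := by
  constructor
  simp [uniformD, Measure.smul_apply, Measure.coe_finset_sum]
  rw [ENNReal.inv_mul_cancel] <;> simp [Finset.card_ne_zero_of_mem h.choose_spec, h.card_pos.ne']

lemma ft_uniformD (A : Finset ℝ) (ξ : ℝ) :
    ft (uniformD A) ξ = (A.card : ℂ)⁻¹ * ∑ a ∈ A, expFun ξ a := by
  rcases A.eq_empty_or_nonempty with rfl | hA
  · simp [ft, uniformD]
  unfold ft uniformD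
  rw [integral_smul_measure, integral_finset_sum_measure
    (fun i _ => integrable_expFun ξ _)]
  simp only [integral_dirac, ENNReal.toReal_inv, ENNReal.toReal_natCast]
  rw [Complex.real_smul]
  push_cast
  ring

lemma expFun_div (ξ c : ℝ) (b : ℤ) : expFun ξ ((b:ℝ)/c) = expFun (b:ℝ) (ξ/c) := by
  unfold expFun
  congr 2
  push_cast
  ring

lemma ft_scaledB (B : Finset ℤ) (c : ℝ) (hc : c ≠ 0) (ξ : ℝ) :
    ft (scaledB B c) ξ = MB B (ξ / c) := by
  unfold scaledB MB
  rw [ft_uniformD]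
  have hinj : Set.InjOn (fun b : ℤ => (b : ℝ) / c) B := by
    intro a _ b _ h
    field_simp at h
    exact_mod_cast h
  rw [Finset.card_image_of_injOn hinj, Finset.sum_image hinj]
  simp only [expFun_div _ c]

lemma ft_conv (μ ν : Measure ℝ) [IsProbabilityMeasure μ] [IsProbabilityMeasure ν] (ξ : ℝ) :
    ft (μ.conv ν) ξ = ft μ ξ * ft ν ξ := by
  unfold ft Measure.conv
  rw [integral_map (by fun_prop) ((expFun_continuous ξ).aestronglyMeasurable)]
  have : ∀ p : ℝ × ℝ, expFun ξ (p.1 + p.2) = expFun ξ p.1 * expFun ξ p.2 :=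
    fun p => expFun_add' ..
  simp only [this]
  rw [integral_prod_mul]

lemma scaledB_prob (B : Finset ℤ) (c : ℝ) (h : B.Nonempty) :
    IsProbabilityMeasure (scaledB B c) :=
  uniformD_prob _ (h.image _)

lemma prodN_pos (N : ℕ → ℕ) (h : ∀ i ≥ 1, 1 ≤ N i) (k : ℕ) :
    0 < ∏ i ∈ Finset.Icc 1 k, (N i : ℝ) := by
  apply Finset.prod_pos
  intro i hi
  exact_mod_cast Nat.lt_of_lt_of_le Nat.zero_lt_one (h i (Finset.mem_Icc.mp hi).1)

lemma partialConv_prob (N : ℕ → ℕ) (B : ℕ → Finset ℤ) (hB : ∀ i ≥ 1, (B i).Nonempty) :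
    ∀ k, IsProbabilityMeasure (partialConv N B k)
  | 0 => by unfold partialConv; infer_instance
  | k + 1 => by
      unfold partialConv
      haveI := partialConv_prob N B hB k
      haveI := scaledB_prob (B (k+1)) (∏ i ∈ Finset.Icc 1 (k+1), (N i : ℝ)) (hB _ (by omega))
      infer_instance

lemma ft_partialConv (N : ℕ → ℕ) (B : ℕ → Finset ℤ) (hB : ∀ i ≥ 1, (B i).Nonempty)
    (hN : ∀ i ≥ 1, 1 ≤ N i) (ξ : ℝ) :
    ∀ k, ft (partialConv N B k) ξ =
      ∏ i ∈ Finset.Icc 1 k, MB (B i) (ξ / ∏ j ∈ Finset.Icc 1 i, (N j : ℝ))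
  | 0 => by
      simp [partialConv, ft, integral_dirac, expFun]
  | k + 1 => by
      unfold partialConv
      haveI := partialConv_prob N B hB k
      haveI := scaledB_prob (B (k+1)) (∏ i ∈ Finset.Icc 1 (k+1), (N i : ℝ)) (hB _ (by omega))
      rw [ft_conv, ft_partialConv N B hB hN ξ k,
        ft_scaledB _ _ (prodN_pos N hN (k+1)).ne']
      simp [Finset.prod_Icc_succ_top (show 1 ≤ k+1 by omega)]

end FtPartialConv

section WeakConvergence

/-- cos part as bounded continuous function -/
noncomputable def cosBCF (ξ : ℝ) : BoundedContinuousFunction ℝ ℝ :=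
  BoundedContinuousFunction.ofNormedAddCommGroup (fun x => Real.cos (-2 * Real.pi * ξ * x))
    (by fun_prop) 1 (fun x => by simpa using Real.abs_cos_le_one _)

noncomputable def sinBCF (ξ : ℝ) : BoundedContinuousFunction ℝ ℝ :=
  BoundedContinuousFunction.ofNormedAddCommGroup (fun x => Real.sin (-2 * Real.pi * ξ * x))
    (by fun_prop) 1 (fun x => by simpa using Real.abs_sin_le_one _)

lemma expFun_eq (ξ x : ℝ) :
    expFun ξ x = (cosBCF ξ x : ℂ) + (sinBCF ξ x : ℂ) * Complex.I := by
  simp only [expFun, Complex.exp_mul_I, ← Complex.ofReal_cos, ← Complex.ofReal_sin,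
    cosBCF, sinBCF, BoundedContinuousFunction.coe_ofNormedAddCommGroup]

lemma ft_eq_re_im (μ : Measure ℝ) [IsFiniteMeasure μ] (ξ : ℝ) :
    ft μ ξ = ((∫ x, cosBCF ξ x ∂μ : ℝ) : ℂ) + ((∫ x, sinBCF ξ x ∂μ : ℝ) : ℂ) * Complex.I := by
  unfold ft
  simp only [expFun_eq]
  rw [integral_add ?_ ?_, integral_mul_const]
  · rw [show (∫ a, ((cosBCF ξ a : ℝ) : ℂ) ∂μ) = ((∫ x, cosBCF ξ x ∂μ : ℝ) : ℂ) from integral_ofReal,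
      show (∫ a, ((sinBCF ξ a : ℝ) : ℂ) ∂μ) = ((∫ x, sinBCF ξ x ∂μ : ℝ) : ℂ) from integral_ofReal]
  · exact ((cosBCF ξ).integrable μ).ofReal
  · exact (((sinBCF ξ).integrable μ).ofReal).mul_const _

lemma ft_tendsto (μk : ℕ → Measure ℝ) (μ : Measure ℝ) [IsFiniteMeasure μ]
    [∀ k, IsFiniteMeasure (μk k)]
    (h : ∀ f : BoundedContinuousFunction ℝ ℝ,
      Tendsto (fun k => ∫ x, f x ∂(μk k)) atTop (𝓝 (∫ x, f x ∂μ)))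
    (ξ : ℝ) : Tendsto (fun k => ft (μk k) ξ) atTop (𝓝 (ft μ ξ)) := by
  simp only [ft_eq_re_im]
  exact ((Complex.continuous_ofReal.tendsto _).comp (h (cosBCF ξ))).add
    ((((Complex.continuous_ofReal.tendsto _).comp (h (sinBCF ξ)))).mul_const _)

end WeakConvergence

section Decomposition

lemma prod_Icc_shift {α : Type*} [CommMonoid α] (f : ℕ → α) (k : ℕ) :
    ∀ m, ∏ i ∈ Finset.Icc 1 (k + m), f i =
      (∏ i ∈ Finset.Icc 1 k, f i) * ∏ j ∈ Finset.Icc 1 m, f (k + j)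
  | 0 => by simp
  | m + 1 => by
      rw [← add_assoc, Finset.prod_Icc_succ_top (by omega : 1 ≤ k + m + 1),
        prod_Icc_shift f k m, Finset.prod_Icc_succ_top (by omega : 1 ≤ m + 1), mul_assoc,
        add_assoc]

set_option maxHeartbeats 1000000 in
lemma ft_decomp (N : ℕ → ℕ) (B : ℕ → Finset ℤ) (μ : Measure ℝ) (νk : Measure ℝ) (k : ℕ)
    (hB : ∀ i ≥ 1, (B i).Nonempty) (hN : ∀ i ≥ 1, 1 ≤ N i)
    (hμ : IsInfiniteConv N B μ) (hνk : IsNuGt N B k (νk)) (ξ : ℝ) :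
    ft μ ξ = (∏ i ∈ Finset.Icc 1 k, MB (B i) (ξ / ∏ j ∈ Finset.Icc 1 i, (N j : ℝ))) *
      ft νk (ξ / ∏ j ∈ Finset.Icc 1 k, (N j : ℝ)) := by
  haveI := hμ.1
  haveI := hνk.1
  haveI hpc1 : ∀ m, IsProbabilityMeasure (partialConv N B m) := partialConv_prob N B hB
  haveI hpc2 : ∀ m, IsProbabilityMeasure (partialConv (fun j => N (k + j)) (fun j => B (k + j)) m) :=
    partialConv_prob _ _ (fun i _ => hB (k + i) (by omega))
  set P : ℕ → ℝ := fun i => ∏ j ∈ Finset.Icc 1 i, (N j : ℝ) with hP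
  have hPpos : ∀ i, 0 < P i := by
    intro i
    apply Finset.prod_pos
    intro j hj
    exact_mod_cast Nat.lt_of_lt_of_le Nat.zero_lt_one (hN j (Finset.mem_Icc.mp hj).1)
  set g : ℕ → ℂ := fun i => MB (B i) (ξ / P i) with hg
  have hfull : Tendsto (fun m => ∏ i ∈ Finset.Icc 1 m, g i) atTop (𝓝 (ft μ ξ)) := by
    have := ft_tendsto (partialConv N B) μ hμ.2 ξ
    simpa only [ft_partialConv N B hB hN ξ] using this
  have htail : Tendsto (fun m => ∏ j ∈ Finset.Icc 1 m, g (k + j)) atTop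
      (𝓝 (ft νk (ξ / P k))) := by
    have h1 := ft_tendsto (partialConv (fun j => N (k + j)) (fun j => B (k + j))) νk
      hνk.2 (ξ / P k)
    have h2 := ft_partialConv (fun j => N (k + j)) (fun j => B (k + j))
      (fun i hi => hB (k + i) (by omega)) (fun i hi => hN (k + i) (by omega)) (ξ / P k)
    have h3 : ∀ m, ft (partialConv (fun j => N (k + j)) (fun j => B (k + j)) m) (ξ / P k)
        = ∏ j ∈ Finset.Icc 1 m, g (k + j) := by
      intro m
      rw [h2 m]
      apply Finset.prod_congr rfl
      intro j hj
      have hPsplit : P (k + j) = P k * ∏ i ∈ Finset.Icc 1 j, ((N (k + i) : ℝ)) := by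
        rw [hP]
        exact prod_Icc_shift (fun i => (N i : ℝ)) k j
      rw [hg]
      congr 1
      rw [hPsplit, div_div]
    simpa only [h3] using h1
  have hshift : Tendsto (fun m => ∏ i ∈ Finset.Icc 1 (k + m), g i) atTop (𝓝 (ft μ ξ)) := by
    have h4 : Tendsto (fun m : ℕ => k + m) atTop atTop :=
      Filter.Tendsto.congr (fun n => add_comm n k) (tendsto_add_atTop_nat k)
    exact hfull.comp h4
  have hsplit : (fun m => ∏ i ∈ Finset.Icc 1 (k + m), g i) =
      fun m => (∏ i ∈ Finset.Icc 1 k, g i) * ∏ j ∈ Finset.Icc 1 m, g (k + j) := by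
    funext m
    exact prod_Icc_shift g k m
  rw [hsplit] at hshift
  exact tendsto_nhds_unique hshift (htail.const_mul _)

end Decomposition

section Tightness

/-- uniform nonvanishing of ft near 0 for a tight family of probability measures -/
lemma ft_nonzero_of_tight {ι : Type*} (Φ : ι → Measure ℝ) [∀ i, IsProbabilityMeasure (Φ i)]
    (htight : ∀ ε : ENNReal, 0 < ε → ∃ K : Set ℝ, IsCompact K ∧ ∀ i, 1 - ε < Φ i K) :
    ∃ c : ℝ, 0 < c ∧ ∀ i, ∀ t : ℝ, |t| ≤ c → ft (Φ i) t ≠ 0 := by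
  obtain ⟨K, hK, hKbig⟩ := htight (1/8) (by norm_num)
  obtain ⟨R, hRpos, hKR⟩ : ∃ R : ℝ, 0 < R ∧ K ⊆ Metric.closedBall 0 R := by
    rcases (hK.isBounded).subset_closedBall 0 with ⟨R, hR⟩
    exact ⟨max R 1, by positivity, hR.trans (Metric.closedBall_subset_closedBall (le_max_left _ _))⟩
  refine ⟨1 / (32 * Real.pi * R), by positivity, ?_⟩
  intro i t ht
  have hprob : IsProbabilityMeasure (Φ i) := inferInstance
  have hbound : ∀ x ∈ K, ‖expFun t x - 1‖ ≤ 1/4 := by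
    intro x hx
    have hxR : |x| ≤ R := by simpa [Real.norm_eq_abs] using Metric.mem_closedBall.mp (hKR hx)
    have harg : ‖(((-2 * Real.pi * t * x : ℝ) : ℂ) * Complex.I)‖ = 2 * Real.pi * (|t| * |x|) := by
      simp [map_mul, Complex.norm_I, Complex.norm_real, abs_mul,
        abs_of_pos Real.pi_pos]
      ring
    have hsmall : ‖(((-2 * Real.pi * t * x : ℝ) : ℂ) * Complex.I)‖ ≤ 1/8 := by
      rw [harg]
      have h1 : |t| * |x| ≤ (1 / (32 * Real.pi * R)) * R := by
        apply mul_le_mul ht hxR (abs_nonneg _) (by positivity)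
      calc 2 * Real.pi * (|t| * |x|) ≤ 2 * Real.pi * ((1 / (32 * Real.pi * R)) * R) := by
            apply mul_le_mul_of_nonneg_left h1 (by positivity)
        _ = 1/16 := by field_simp; ring
        _ ≤ 1/8 := by norm_num
    have := Complex.norm_exp_sub_one_le (x := (((-2 * Real.pi * t * x : ℝ) : ℂ) * Complex.I))
      (by simpa using hsmall.trans (by norm_num))
    unfold expFun
    calc ‖Complex.exp (((-2 * Real.pi * t * x : ℝ) : ℂ) * Complex.I) - 1‖
        ≤ 2 * ‖(((-2 * Real.pi * t * x : ℝ) : ℂ) * Complex.I)‖ := by simpa using this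
      _ ≤ 2 * (1/8) := by linarith
      _ = 1/4 := by norm_num
  have hKmeas : MeasurableSet K := hK.isClosed.measurableSet
  have hcompl : (Φ i Kᶜ).toReal ≤ 1/8 := by
    have h1 : Φ i Kᶜ = 1 - Φ i K := prob_compl_eq_one_sub hKmeas
    have h2 : Φ i Kᶜ ≤ 1/8 := by
      rw [h1, tsub_le_iff_right]
      calc (1:ENNReal) = 1/8 + (1 - 1/8) := by
            rw [add_comm]; exact (tsub_add_cancel_of_le (by norm_num)).symm
        _ ≤ 1/8 + Φ i K := by gcongr; exact le_of_lt (hKbig i)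
    calc (Φ i Kᶜ).toReal ≤ ((1:ENNReal)/8).toReal := ENNReal.toReal_mono (by norm_num) h2
      _ = 1/8 := by norm_num
  have hint : Integrable (fun x => expFun t x - 1) (Φ i) :=
    (integrable_expFun t (Φ i)).sub (integrable_const 1)
  have hft : ft (Φ i) t - 1 = ∫ x, (expFun t x - 1) ∂(Φ i) := by
    rw [integral_sub (integrable_expFun t (Φ i)) (integrable_const 1)]
    simp [ft, measure_univ]
  have hest : ‖ft (Φ i) t - 1‖ ≤ 1/2 := by
    rw [hft]
    calc ‖∫ x, (expFun t x - 1) ∂(Φ i)‖ ≤ ∫ x, ‖expFun t x - 1‖ ∂(Φ i) :=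
          norm_integral_le_integral_norm _
      _ = (∫ x in K, ‖expFun t x - 1‖ ∂(Φ i)) + ∫ x in Kᶜ, ‖expFun t x - 1‖ ∂(Φ i) := by
          rw [integral_add_compl hKmeas hint.norm]
      _ ≤ 1/4 * ((Φ i) K).toReal + 2 * ((Φ i) Kᶜ).toReal := by
          have hA : ‖∫ x in K, ‖expFun t x - 1‖ ∂(Φ i)‖ ≤
              1/4 * (((Φ i).restrict K) Set.univ).toReal := by
            apply norm_integral_le_of_norm_le_const
            filter_upwards [ae_restrict_mem hKmeas] with x hx
            rw [norm_norm]
            exact hbound x hx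
          have hB : ‖∫ x in Kᶜ, ‖expFun t x - 1‖ ∂(Φ i)‖ ≤
              2 * (((Φ i).restrict Kᶜ) Set.univ).toReal := by
            apply norm_integral_le_of_norm_le_const
            filter_upwards with x
            rw [norm_norm]
            calc ‖expFun t x - 1‖ ≤ ‖expFun t x‖ + ‖(1:ℂ)‖ := norm_sub_le _ _
              _ = 2 := by rw [expFun_norm]; norm_num
          rw [Measure.restrict_apply_univ] at hA hB
          exact add_le_add ((Real.le_norm_self _).trans hA) ((Real.le_norm_self _).trans hB)
      _ ≤ 1/4 * 1 + 2 * (1/8) := by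
          gcongr
          · exact le_trans (ENNReal.toReal_mono (by norm_num) prob_le_one) (by norm_num)
      _ = 1/2 := by norm_num
  intro h0
  rw [h0] at hest
  simp at hest
  norm_num at hest

end Tightness

section PolynomialPart

variable {B : Finset ℤ} {M : ℕ}

lemma crs_card (hM : 2 ≤ M) (h : IsCRS B M) : B.card = M := by
  haveI : NeZero M := ⟨by omega⟩
  have himg : B.image (fun b : ℤ => (b : ZMod M)) = Finset.univ := by
    apply Finset.eq_univ_of_forall
    intro r
    obtain ⟨b, ⟨hb, hbr⟩, _⟩ := h r
    exact Finset.mem_image.mpr ⟨b, hb, hbr⟩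
  have hinj : Set.InjOn (fun b : ℤ => (b : ZMod M)) B := by
    intro a ha b hb hab
    obtain ⟨c, _, huniq⟩ := h (a : ZMod M)
    rw [huniq a ⟨ha, rfl⟩, huniq b ⟨hb, hab.symm⟩]
  rw [← Finset.card_image_of_injOn hinj, himg, Finset.card_univ, ZMod.card]

lemma crs_nonempty (hM : 2 ≤ M) (h : IsCRS B M) : B.Nonempty :=
  Finset.card_pos.mp (by rw [crs_card hM h]; omega)

lemma min_untop (h : B.Nonempty) : B.min.untopD 0 = B.min' h := by
  rw [← Finset.coe_min' h]; rfl

lemma min_le_of_mem' (h : B.Nonempty) {b : ℤ} (hb : b ∈ B) : B.min.untopD 0 ≤ b := by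
  rw [min_untop h]; exact Finset.min'_le _ _ hb

lemma dvd_pow_sub_pow_mod (M e : ℕ) :
    ((X : Polynomial ℤ) ^ M - 1) ∣ (X ^ e - X ^ (e % M)) := by
  have he : (X : Polynomial ℤ) ^ e = ((X ^ M) ^ (e / M)) * X ^ (e % M) := by
    rw [← pow_mul, ← pow_add, Nat.div_add_mod]
  rw [he, ← one_mul ((X:Polynomial ℤ) ^ (e % M)), ← mul_assoc, mul_one, ← sub_mul]
  exact Dvd.dvd.mul_right (by simpa using sub_dvd_pow_sub_pow ((X : Polynomial ℤ)^M) 1 (e / M)) _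

lemma sum_pow_mod_eq (hM : 2 ≤ M) (h : IsCRS B M) :
    ∑ b ∈ B, (X : Polynomial ℤ) ^ (((b - B.min.untopD 0).toNat) % M) = geomPoly M := by
  classical
  have hne := crs_nonempty hM h
  have hMpos : 0 < M := by omega
  unfold geomPoly
  apply Finset.sum_bij (i := fun b _ => ((b - B.min.untopD 0).toNat) % M)
  · intro a ha
    exact Finset.mem_range.mpr (Nat.mod_lt _ hMpos)
  · intro a ha b hb hab
    have key : ∀ c ∈ B, ((((c - B.min.untopD 0).toNat % M : ℕ) : ZMod M)) =
        ((c : ZMod M) - ((B.min.untopD 0 : ℤ) : ZMod M)) := by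
      intro c hc
      rw [ZMod.natCast_mod]
      have : ((c - B.min.untopD 0).toNat : ℤ) = c - B.min.untopD 0 :=
        Int.toNat_of_nonneg (by linarith [min_le_of_mem' hne hc])
      calc (((c - B.min.untopD 0).toNat : ℕ) : ZMod M)
          = (((c - B.min.untopD 0).toNat : ℤ) : ZMod M) := by push_cast; ring
        _ = ((c : ZMod M) - ((B.min.untopD 0 : ℤ) : ZMod M)) := by rw [this]; push_cast; ring
    have : (a : ZMod M) = (b : ZMod M) := by
      have ha' := key a ha; have hb' := key b hb
      rw [hab] at ha'
      rw [ha'] at hb'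
      have := sub_left_injective (G := ZMod M) (hb'.symm)
      exact_mod_cast this.symm
    obtain ⟨c, _, huniq⟩ := h (a : ZMod M)
    rw [huniq a ⟨ha, rfl⟩, huniq b ⟨hb, this.symm⟩]
  · intro r hr
    obtain ⟨b, ⟨hb, hbr⟩, _⟩ := h ((r : ZMod M) + ((B.min.untopD 0 : ℤ) : ZMod M))
    refine ⟨b, hb, ?_⟩
    have h1 : ((((b - B.min.untopD 0).toNat % M : ℕ) : ZMod M)) = ((r : ℕ) : ZMod M) := by
      rw [ZMod.natCast_mod]
      have : ((b - B.min.untopD 0).toNat : ℤ) = b - B.min.untopD 0 :=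
        Int.toNat_of_nonneg (by linarith [min_le_of_mem' hne hb])
      calc (((b - B.min.untopD 0).toNat : ℕ) : ZMod M)
          = (((b - B.min.untopD 0).toNat : ℤ) : ZMod M) := by push_cast; ring
        _ = ((b : ZMod M) - ((B.min.untopD 0 : ℤ) : ZMod M)) := by rw [this]; push_cast; ring
        _ = ((r : ℕ) : ZMod M) := by rw [hbr]; ring
    have h2 : (b - B.min.untopD 0).toNat % M < M := Nat.mod_lt _ hMpos
    have h3 : r < M := Finset.mem_range.mp hr
    have := congrArg ZMod.val h1
    rwa [ZMod.val_natCast_of_lt h2, ZMod.val_natCast_of_lt h3] at this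
  · intro a ha; rfl

lemma geom_dvd_numer (hM : 2 ≤ M) (h : IsCRS B M) : geomPoly M ∣ numerPoly B := by
  have h1 : geomPoly M ∣ ((X : Polynomial ℤ) ^ M - 1) :=
    ⟨X - 1, (geom_sum_mul (X : Polynomial ℤ) M).symm⟩
  have h2 : ((X:Polynomial ℤ)^M - 1) ∣ (numerPoly B - geomPoly M) := by
    rw [← sum_pow_mod_eq hM h]
    unfold numerPoly
    rw [← Finset.sum_sub_distrib]
    exact Finset.dvd_sum fun b _ => dvd_pow_sub_pow_mod M _
  have := h1.trans h2
  simpa using dvd_add this (dvd_refl (geomPoly M))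

lemma numer_eq_geom_mul_char (hM : 2 ≤ M) (h : IsCRS B M) :
    numerPoly B = geomPoly M * charPoly B := by
  have hmonic : (geomPoly M).Monic := Polynomial.monic_geom_sum_X (by omega)
  have hdvd := geom_dvd_numer hM h
  have hcard : B.card = M := crs_card hM h
  unfold charPoly
  rw [hcard]
  conv_lhs => rw [← Polynomial.modByMonic_add_div (numerPoly B) (geomPoly M)]
  rw [(Polynomial.modByMonic_eq_zero_iff_dvd hmonic).mpr hdvd, zero_add]

lemma MB_zero_rational (hM : 2 ≤ M) (hcrs : IsCRS B M)
    (hudz : SatisfiesUDZ B M) {η : ℝ} (hzero : MB B η = 0) :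
    ∃ a : ℤ, η = (a : ℝ) / M := by
  classical
  have hne := crs_nonempty hM hcrs
  set z : ℂ := expFun η 1 with hz
  have hz0 : z ≠ 0 := expFun_ne_zero _ _
  set bs : ℤ := B.min.untopD 0 with hbs
  have hsum : ∑ b ∈ B, z ^ b = 0 := by
    have hcard : (B.card : ℂ) ≠ 0 := by
      have := crs_card hM hcrs
      simp [this]; omega
    have := hzero
    unfold MB at this
    rcases mul_eq_zero.mp this with h | h
    · exact absurd h (by simpa using hcard)
    · simpa only [expFun_int] using h
  have hfac : ∑ b ∈ B, z ^ b = z ^ bs * (aeval z (numerPoly B)) := by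
    unfold numerPoly
    rw [map_sum, Finset.mul_sum]
    apply Finset.sum_congr rfl
    intro b hb
    rw [aeval_X_pow]
    rw [← zpow_natCast z ((b - bs).toNat), Int.toNat_of_nonneg (by linarith [min_le_of_mem' hne hb])]
    rw [← zpow_add₀ hz0]
    congr 1
    ring
  have hnum : aeval z (numerPoly B) = 0 := by
    have := hsum
    rw [hfac] at this
    rcases mul_eq_zero.mp this with h | h
    · exact absurd h (zpow_ne_zero _ hz0)
    · exact h
  rw [numer_eq_geom_mul_char hM hcrs, map_mul] at hnum
  rcases mul_eq_zero.mp hnum with h | h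
  · have hgeom : ∑ k ∈ Finset.range M, z ^ k = 0 := by
      unfold geomPoly at h
      simpa [map_sum, aeval_X_pow] using h
    have hzM : z ^ M = 1 := by
      have := geom_sum_mul z M
      rw [hgeom, zero_mul] at this
      linear_combination -this
    have hexp : Complex.exp ((M : ℂ) * (((-2 * Real.pi * η * 1 : ℝ) : ℂ) * Complex.I)) = 1 := by
      rw [Complex.exp_nat_mul]
      exact hzM
    rw [Complex.exp_eq_one_iff] at hexp
    obtain ⟨n, hn⟩ := hexp
    refine ⟨-n, ?_⟩
    have hπ : (Real.pi : ℝ) ≠ 0 := Real.pi_ne_zero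
    have hI : (Complex.I : ℂ) ≠ 0 := Complex.I_ne_zero
    have : ((M : ℝ) * (-2 * Real.pi * η * 1) : ℝ) = ((n : ℝ) * (2 * Real.pi)) := by
      have h2 : ((M : ℂ) * ((-2 * Real.pi * η * 1 : ℝ) : ℂ)) * Complex.I
          = ((n : ℂ) * (2 * Real.pi)) * Complex.I := by
        rw [← mul_assoc] at hn ⊢
        push_cast at hn ⊢
        linear_combination hn
      have h3 := mul_right_cancel₀ hI h2
      exact_mod_cast h3
    have hM0 : (M : ℝ) ≠ 0 := by positivity
    have h2π : (2 * Real.pi) ≠ 0 := by positivity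
    have h5 : -((M : ℝ) * η) = n := by
      apply mul_left_cancel₀ h2π
      linear_combination this
    push_cast
    field_simp
    linarith
  · have : η ∈ {x : ℝ | Polynomial.aeval (expFun x 1) (charPoly B) = 0} := h
    obtain ⟨j, _, hj⟩ := hudz this
    exact ⟨j, hj⟩

end PolynomialPart


theorem stmt12
    (N M : ℕ → ℕ) (B : ℕ → Finset ℤ) (μ : Measure ℝ) (ν : ℕ → Measure ℝ)
    (hM : ∀ k ≥ 1, 2 ≤ M k) (hMN : ∀ k ≥ 1, M k ≤ N k)
    (hCRS : ∀ k ≥ 1, IsCRS (B k) (M k))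
    (hUDZ : ∀ k ≥ 1, SatisfiesUDZ (B k) (M k))
    (hμ : IsInfiniteConv N B μ)
    (hν : ∀ k ≥ 1, IsNuGt N B k (ν k))
    (htight : IsTightFamily fun k => ν (k + 1))
    (Λ : Set ℝ) (hΛ : IsSpectralPair μ Λ) (h0 : (0 : ℝ) ∈ Λ) :
    ∀ l ∈ Λ, ∃ q : ℚ, l = (q : ℝ) := by
  intro l hl
  by_cases hl0 : l = 0
  · exact ⟨0, by simp [hl0]⟩
  have hBne : ∀ i ≥ 1, (B i).Nonempty := fun i hi => crs_nonempty (hM i hi) (hCRS i hi)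
  have hN1 : ∀ i ≥ 1, 1 ≤ N i := fun i hi => le_trans (by omega) ((hM i hi).trans (hMN i hi))
  have hN2 : ∀ i ≥ 1, 2 ≤ N i := fun i hi => (hM i hi).trans (hMN i hi)
  set P : ℕ → ℝ := fun i => ∏ j ∈ Finset.Icc 1 i, (N j : ℝ) with hP
  have hPpos : ∀ i, 0 < P i := fun i => Finset.prod_pos fun j hj =>
    (by exact_mod_cast Nat.lt_of_lt_of_le Nat.zero_lt_one (hN1 j (Finset.mem_Icc.mp hj).1))
  have hP2 : ∀ k, (2 : ℝ) ^ k ≤ P k := by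
    intro k
    rw [hP]
    calc (2:ℝ) ^ k = ∏ j ∈ Finset.Icc 1 k, (2:ℝ) := by
          rw [Finset.prod_const, Nat.card_Icc]; norm_num
      _ ≤ ∏ j ∈ Finset.Icc 1 k, (N j : ℝ) := by
          apply Finset.prod_le_prod (fun j _ => by norm_num)
          intro j hj
          exact_mod_cast hN2 j (Finset.mem_Icc.mp hj).1
  have hft0 : ft μ l = 0 := by
    have := hΛ.1 0 h0 l hl
    rw [if_neg (fun h => hl0 h.symm)] at this
    simpa only [ft, expFun_zero_left, map_one, one_mul] using this
  haveI : ∀ i : ℕ, IsProbabilityMeasure (ν (i + 1)) := fun i => (hν (i + 1) (by omega)).1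
  obtain ⟨c, hcpos, hc⟩ := ft_nonzero_of_tight (fun i => ν (i + 1)) htight
  obtain ⟨k₀, hk₀⟩ := pow_unbounded_of_one_lt (|l| / c) (by norm_num : (1:ℝ) < 2)
  set k := k₀ + 1 with hk
  have hkge : 1 ≤ k := by omega
  have hlPk : |l / P k| ≤ c := by
    have h1 : |l| / c < 2 ^ k₀ := hk₀
    have h2 : (2:ℝ) ^ k₀ ≤ 2 ^ k := by
      apply pow_le_pow_right₀ (by norm_num) (by omega)
    have h3 : |l| / c < P k := lt_of_lt_of_le (lt_of_lt_of_le h1 h2) (hP2 k)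
    rw [abs_div, abs_of_pos (hPpos k), div_le_iff₀ (hPpos k)]
    have h4 : |l| < P k * c := (div_lt_iff₀ hcpos).mp h3
    nlinarith
  have hdec := ft_decomp N B μ (ν k) k hBne hN1 hμ (hν k hkge) l
  rw [hft0] at hdec
  have htail : ft (ν k) (l / P k) ≠ 0 := by
    have := hc k₀ (l / P k) hlPk
    simpa [hk] using this
  have hprod : (∏ i ∈ Finset.Icc 1 k, MB (B i) (l / P i)) = 0 := by
    rcases mul_eq_zero.mp hdec.symm with h | h
    · exact h
    · exact absurd h htail
  obtain ⟨i, hiIcc, hi0⟩ := Finset.prod_eq_zero_iff.mp hprod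
  have hi1 : 1 ≤ i := (Finset.mem_Icc.mp hiIcc).1
  obtain ⟨a, ha⟩ := MB_zero_rational (hM i hi1) (hCRS i hi1) (hUDZ i hi1) hi0
  set Pnat : ℕ := ∏ j ∈ Finset.Icc 1 i, N j with hPnat
  have hPcast : P i = (Pnat : ℝ) := by rw [hP, hPnat]; push_cast; rfl
  refine ⟨(a : ℚ) * (Pnat : ℚ) / (M i : ℚ), ?_⟩
  have hMi : (M i : ℝ) ≠ 0 := by
    have := hM i hi1; positivity
  have : l = (a : ℝ) / (M i) * P i := by
    rw [← ha, div_mul_cancel₀ _ (hPpos i).ne']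
  rw [this, hPcast]
  push_cast
  field_simp
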